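/- Let s, t, n be positive integers with s dividing t, t dividing n, and s ≠ t, and let q ≥ 2. Write q̂ = q^s, n̂ = n/s, a = t/s. Then ∏_{i=0}^{n̂-1} (q̂^{n̂} - q̂^i) > n · ∏_{i=0}^{n̂/a - 1} (q̂^{n̂} - q̂^{ai}), provided n ≥ 4. (This says |GL_{n/s}(q^s)| exceeds |N_{GL_n(q)}(GL_{n/t}(q^t))| = t·|GL_{n/t}(q^t)|.) -/

import Mathlib

-- arithmetic core lemma
theorem arith5 (s N : ℕ) (hs : 1 ≤ s) (hN : 2 ≤ N) (hn4 : 4 ≤ s * N) :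
    s * N < 2 ^ (s * (N - 1)) * (2 ^ s - 1) := by
  by_cases hs1 : s = 1
  · subst hs1
    simp only [one_mul] at *
    have ha : N - 2 < 2 ^ (N - 2) := Nat.lt_two_pow_self
    have hb : 2 ^ (N - 1) = 2 * 2 ^ (N - 2) := by
      rw [← pow_succ']; congr 1; omega
    have : (2:ℕ)^1 - 1 = 1 := by norm_num
    rw [this, mul_one]
    omega
  · have hs2 : 2 ≤ s := by omega
    have h1 : N - 1 < 2 ^ (N - 1) := Nat.lt_two_pow_self
    have h2 : (2:ℕ) ^ (N - 1) ≤ 2 ^ (s * (N - 1)) :=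
      Nat.pow_le_pow_right (by norm_num) (Nat.le_mul_of_pos_left _ hs)
    have h3 : s - 1 < 2 ^ (s - 1) := Nat.lt_two_pow_self
    have h4 : (2:ℕ) ^ s = 2 * 2 ^ (s - 1) := by rw [← pow_succ']; congr 1; omega
    have h5 : s + 1 ≤ 2 ^ s - 1 := by omega
    calc s * N < (s + 1) * N := by
          exact (Nat.mul_lt_mul_right (by omega : 0 < N)).mpr (by omega)
      _ ≤ (2 ^ s - 1) * 2 ^ (s * (N - 1)) := Nat.mul_le_mul h5 (by omega)
      _ = 2 ^ (s * (N - 1)) * (2 ^ s - 1) := mul_comm _ _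

/-- For `q ≥ 2`, `n ≥ 4`, `s ∣ t ∣ n`, `s ≠ t`, with `q̂ = q^s`, `n̂ = n/s`, `a = t/s`:
`∏_{i=0}^{n̂-1}(q̂^n̂ - q̂^i) > n · ∏_{i=0}^{n̂/a-1}(q̂^n̂ - q̂^{ai})`,
i.e. `|GL_{n/s}(q^s)| > |N_{GL_n(q)}(GL_{n/t}(q^t))|`. -/
theorem stmt5 (q n s t : ℕ) (hq : 2 ≤ q) (hn : 4 ≤ n) (hst : s ∣ t) (htn : t ∣ n)
    (hne : s ≠ t) (hs : 1 ≤ s) :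
    n * ∏ i ∈ Finset.range (n / t), ((q ^ s) ^ (n / s) - (q ^ s) ^ ((t / s) * i)) <
      ∏ i ∈ Finset.range (n / s), ((q ^ s) ^ (n / s) - (q ^ s) ^ i) := by
  obtain ⟨a, rfl⟩ := hst
  obtain ⟨m, rfl⟩ := htn
  have hs0 : 0 < s := hs
  have ha0 : 0 < a := by
    rcases Nat.eq_zero_or_pos a with h | h
    · subst h; simp at hn
    · exact h
  have hm0 : 0 < m := by
    rcases Nat.eq_zero_or_pos m with h | h
    · subst h; simp at hn
    · exact h
  have ha2 : 2 ≤ a := by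
    have h1 : a ≠ 1 := fun h => hne (by rw [h, mul_one])
    omega
  have e1 : s * a * m / (s * a) = m := Nat.mul_div_cancel_left m (by positivity)
  have e2 : s * a / s = a := Nat.mul_div_cancel_left a hs0
  have e3 : s * a * m / s = a * m := by rw [mul_assoc]; exact Nat.mul_div_cancel_left _ hs0
  rw [e1, e2, e3]
  set Q := q ^ s with hQdef
  have hQ : 2 ≤ Q := le_trans hq (Nat.le_self_pow (by omega) q)
  set N := a * m with hNdef
  have hN2 : 2 ≤ N := by calc 2 = 2 * 1 := rfl
                           _ ≤ a * m := Nat.mul_le_mul ha2 hm0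
  set S : Finset ℕ := (Finset.range m).image (fun i => a * i) with hSdef
  have hprod : ∏ i ∈ Finset.range m, (Q ^ N - Q ^ (a * i)) = ∏ j ∈ S, (Q ^ N - Q ^ j) :=
    (Finset.prod_image (f := fun j => Q ^ N - Q ^ j) (g := fun i => a * i)
      (fun x _ y _ h => Nat.eq_of_mul_eq_mul_left ha0 h)).symm
  have hsub : S ⊆ Finset.range N := by
    intro j hj
    simp only [hSdef, Finset.mem_image, Finset.mem_range] at hj
    obtain ⟨i, hi, rfl⟩ := hj
    exact Finset.mem_range.mpr (mul_lt_mul_of_pos_left hi ha0)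
  have hfpos : ∀ j, j < N → 0 < Q ^ N - Q ^ j := fun j hj =>
    Nat.sub_pos_of_lt (Nat.pow_lt_pow_right (by omega) hj)
  have hSpos : 0 < ∏ j ∈ S, (Q ^ N - Q ^ j) :=
    Finset.prod_pos fun j hj => hfpos j (Finset.mem_range.mp (hsub hj))
  have hsplit := Finset.prod_sdiff (f := fun j => Q ^ N - Q ^ j) hsub
  have hmem : N - 1 ∈ Finset.range N \ S := by
    rw [Finset.mem_sdiff]
    constructor
    · exact Finset.mem_range.mpr (by omega)
    · simp only [hSdef, Finset.mem_image, Finset.mem_range]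
      rintro ⟨i, hi, hij⟩
      have : a * (i + 1) ≤ a * m := Nat.mul_le_mul_left a hi
      rw [Nat.mul_add, mul_one] at this
      omega
  -- key inequality: s*a*m < Q^N - Q^(N-1)
  have hkey : s * a * m < Q ^ N - Q ^ (N - 1) := by
    have h1 : Q ^ N = Q ^ (N - 1) * Q := by
      conv_lhs => rw [show N = (N - 1) + 1 by omega]
      rw [pow_succ]
    have h2 : Q ^ N - Q ^ (N - 1) = Q ^ (N - 1) * (Q - 1) := by
      rw [h1, Nat.mul_sub, mul_one]
    rw [h2]
    have ha1 : 2 ^ (s * (N - 1)) ≤ Q ^ (N - 1) := by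
      rw [hQdef, ← pow_mul]
      exact Nat.pow_le_pow_left hq _
    have ha2' : 2 ^ s - 1 ≤ Q - 1 := by
      have := Nat.pow_le_pow_left hq s
      omega
    calc s * a * m = s * N := by rw [hNdef, mul_assoc]
      _ < 2 ^ (s * (N - 1)) * (2 ^ s - 1) := arith5 s N hs hN2 (by rw [← mul_assoc] at *; omega)
      _ ≤ Q ^ (N - 1) * (Q - 1) := Nat.mul_le_mul ha1 ha2'
  rw [hprod, ← hsplit]
  refine Nat.mul_lt_mul_of_lt_of_le ?_ le_rfl hSpos
  calc s * a * m < Q ^ N - Q ^ (N - 1) := hkey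
    _ ≤ ∏ j ∈ Finset.range N \ S, (Q ^ N - Q ^ j) :=
        Finset.single_le_prod' (f := fun j => Q ^ N - Q ^ j)
          (fun j hj => hfpos j (Finset.mem_range.mp ((Finset.mem_sdiff.mp hj).1)))
          hmem
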